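/- (Lemma 3) Let n ≥ 1, γ > 1, ε > 0, and q < -n - 2/(γ-1). Let 𝒱 ⊆ ℝⁿ \ B_ε(0) be measurable and ρ: 𝒱 → [0,∞) measurable with ∫_𝒱 |x|^{q-2} ρ^γ dx < ∞. Then ∫_𝒱 |x|^{q-2} ρ(x)^γ dx ≥ C₁ · (∫_𝒱 |x|^q ρ(x) dx)^γ · ε^{-((q+n)(γ-1)+2)}, where C₁ = (σ_n(1-γ)/((q+n)(γ-1)+2))^{1-γ} and σ_n is the surface measure of the unit sphere in ℝⁿ. -/

import Mathlib

open MeasureTheory Real Set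

lemma my_memLp_of_integrable_rpow {α : Type*} [MeasurableSpace α] {μ : Measure α}
    {f : α → ℝ} (hm : AEStronglyMeasurable f μ) {p : ℝ} (hp : 0 < p)
    (h : Integrable (fun x => ‖f x‖ ^ p) μ) : MemLp f (ENNReal.ofReal p) μ := by
  have hp0 : ENNReal.ofReal p ≠ 0 := by simp [ENNReal.ofReal_eq_zero]; linarith
  have hpt : ENNReal.ofReal p ≠ ⊤ := ENNReal.ofReal_ne_top
  have := (memLp_norm_rpow_iff (p := ENNReal.ofReal p) hm hp0 hpt).1
  apply this
  rw [ENNReal.div_self hp0 hpt, ENNReal.toReal_ofReal hp.le, memLp_one_iff_integrable]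
  exact h

lemma my_nontrivial (n : ℕ) (hn : 1 ≤ n) : Nontrivial (EuclideanSpace ℝ (Fin n)) := by
  refine ⟨EuclideanSpace.single ⟨0, hn⟩ 1, 0, ?_⟩
  intro h
  have := congrArg (fun v : EuclideanSpace ℝ (Fin n) => v ⟨0, hn⟩) h
  simp [EuclideanSpace.single] at this

lemma my_integrableOn (n : ℕ) (hn : 1 ≤ n) {ε s : ℝ} (hε : 0 < ε) (hs : s + n < 0) :
    IntegrableOn (fun x : EuclideanSpace ℝ (Fin n) => ‖x‖ ^ s)
      {x : EuclideanSpace ℝ (Fin n) | ε ≤ ‖x‖} volume := by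
  have hs0 : s < 0 := by have : (0:ℝ) ≤ n := Nat.cast_nonneg n; linarith
  have hnr : (Module.finrank ℝ (EuclideanSpace ℝ (Fin n)) : ℝ) < -s := by
    rw [finrank_euclideanSpace_fin]; linarith
  have hint : Integrable (fun x : EuclideanSpace ℝ (Fin n) => (1 + ‖x‖) ^ (-(-s))) volume := by
    simpa using integrable_one_add_norm (E := EuclideanSpace ℝ (Fin n)) hnr
  have hc : (0:ℝ) < 1 + 1/ε := by positivity
  refine Integrable.mono' ((hint.const_mul ((1 + 1/ε) ^ (-s))).restrict
    (s := {x : EuclideanSpace ℝ (Fin n) | ε ≤ ‖x‖})) ?_ ?_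
  · exact (measurable_norm.pow_const s).aestronglyMeasurable
  · filter_upwards [ae_restrict_mem (by
      exact measurableSet_le measurable_const measurable_norm)] with x hx
    have hxε : ε ≤ ‖x‖ := hx
    have hx0 : (0:ℝ) < ‖x‖ := lt_of_lt_of_le hε hxε
    have h1 : (1 + ‖x‖) / (1 + 1/ε) ≤ ‖x‖ := by
      rw [div_le_iff₀ hc]
      calc 1 + ‖x‖ ≤ ‖x‖/ε + ‖x‖ := by linarith [(one_le_div hε).2 hxε]
        _ = ‖x‖ * (1 + 1/ε) := by ring
    have h2 : (0:ℝ) < (1 + ‖x‖) / (1 + 1/ε) := by positivity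
    have h3 : ‖x‖ ^ s ≤ ((1 + ‖x‖) / (1 + 1/ε)) ^ s :=
      rpow_le_rpow_of_nonpos h2 h1 hs0.le
    rw [Real.norm_of_nonneg (rpow_nonneg (norm_nonneg x) s)]
    calc ‖x‖ ^ s ≤ ((1 + ‖x‖) / (1 + 1/ε)) ^ s := h3
      _ = (1 + 1/ε) ^ (-s) * (1 + ‖x‖) ^ s := by
          rw [div_rpow (by positivity) hc.le, rpow_neg hc.le, div_eq_mul_inv, mul_comm]
      _ = (1 + 1/ε) ^ (-s) * (1 + ‖x‖) ^ (-(-s)) := by rw [neg_neg]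

lemma my_polar_value (n : ℕ) (hn : 1 ≤ n) {ε s : ℝ} (hε : 0 < ε) (hs : s + n < 0) :
    ∫ x in {x : EuclideanSpace ℝ (Fin n) | ε ≤ ‖x‖}, ‖x‖ ^ s =
      (n * (volume (Metric.ball (0 : EuclideanSpace ℝ (Fin n)) 1)).toReal) *
        (ε ^ (s + n) / (-(s + n))) := by
  haveI := my_nontrivial n hn
  have hSmeas : MeasurableSet {x : EuclideanSpace ℝ (Fin n) | ε ≤ ‖x‖} :=
    measurableSet_le measurable_const measurable_norm
  set F : ℝ → ℝ := Set.indicator (Ici ε) (fun y => y ^ s) with hF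
  have h1 : ∫ x in {x : EuclideanSpace ℝ (Fin n) | ε ≤ ‖x‖}, ‖x‖ ^ s
      = ∫ x : EuclideanSpace ℝ (Fin n), F ‖x‖ := by
    rw [← integral_indicator hSmeas]
    congr 1 with x
  rw [h1, integral_fun_norm_addHaar (volume : Measure (EuclideanSpace ℝ (Fin n))) F]
  rw [finrank_euclideanSpace_fin]
  have h2 : ∫ y in Ioi (0:ℝ), y ^ (n - 1) • F y = ∫ y in Ioi ε, y ^ ((n:ℝ) - 1 + s) := by
    have heq : ∀ y : ℝ, y ^ (n-1) • F y = Set.indicator (Ici ε) (fun y => y ^ (n-1) * y ^ s) y := by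
      intro y
      simp only [F, Set.indicator_apply, smul_eq_mul]
      split <;> simp
    simp_rw [heq]
    rw [setIntegral_indicator measurableSet_Ici,
      show Ioi (0:ℝ) ∩ Ici ε = Ici ε from
        inter_eq_self_of_subset_right (fun y (hy : ε ≤ y) => lt_of_lt_of_le hε hy),
      ← integral_Ici_eq_integral_Ioi]
    refine setIntegral_congr_fun measurableSet_Ici fun y hy => ?_
    have hy0 : 0 < y := lt_of_lt_of_le hε hy
    rw [← Real.rpow_natCast y (n-1), Nat.cast_sub hn, Nat.cast_one,
      ← Real.rpow_add hy0]
  rw [h2, integral_Ioi_rpow_of_lt (by linarith) hε]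
  rw [nsmul_eq_mul, smul_eq_mul, show (n:ℝ) - 1 + s + 1 = s + n by ring]
  rw [div_neg]
  simp only [measureReal_def]
  ring

/-- Lemma 3: for q < -n - 2/(γ-1) and 𝒱 outside B_ε(0),
∫_𝒱 |x|^{q-2} ρ^γ dx ≥ C₁ (∫_𝒱 |x|^q ρ dx)^γ ε^{-((q+n)(γ-1)+2)},
with C₁ = (σ_n(1-γ)/((q+n)(γ-1)+2))^{1-γ}. -/
theorem stmt3 (n : ℕ) (hn : 1 ≤ n) (γ : ℝ) (hγ : 1 < γ) (ε : ℝ) (hε : 0 < ε)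
    (q : ℝ) (hq : q < -(n : ℝ) - 2 / (γ - 1))
    (𝒱 : Set (EuclideanSpace ℝ (Fin n))) (hmeas : MeasurableSet 𝒱)
    (hout : ∀ x ∈ 𝒱, ε ≤ ‖x‖)
    (ρ : EuclideanSpace ℝ (Fin n) → ℝ) (hρ : Measurable ρ) (hρ0 : ∀ x, 0 ≤ ρ x)
    (hfin : IntegrableOn (fun x => ‖x‖ ^ (q - 2) * ρ x ^ γ) 𝒱 volume) :
    let σn : ℝ := n * (volume (Metric.ball (0 : EuclideanSpace ℝ (Fin n)) 1)).toReal
    let C₁ : ℝ := (σn * (1 - γ) / ((q + n) * (γ - 1) + 2)) ^ (1 - γ)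
    ∫ x in 𝒱, ‖x‖ ^ (q - 2) * ρ x ^ γ ≥
      C₁ * (∫ x in 𝒱, ‖x‖ ^ q * ρ x) ^ γ * ε ^ (-((q + n) * (γ - 1) + 2)) := by
  intro σn C₁
  have hγ1 : (0:ℝ) < γ - 1 := by linarith
  have hγ0 : (0:ℝ) < γ := by linarith
  set A : ℝ := (q + n) * (γ - 1) + 2 with hAdef
  have hA : A < 0 := by
    have h2 : (q + (n:ℝ)) * (γ - 1) < -2 := by
      have h3 := mul_lt_mul_of_pos_right (show q + (n:ℝ) < -(2/(γ-1)) by linarith) hγ1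
      rw [neg_mul, div_mul_cancel₀ _ (ne_of_gt hγ1)] at h3
      linarith
    simp only [hAdef]; linarith
  -- conjugate exponents
  set γ' : ℝ := γ / (γ - 1) with hγ'def
  have hconj : γ.HolderConjugate γ' := Real.HolderConjugate.conjExponent hγ
  have hγ'0 : (0:ℝ) < γ' := hconj.symm.pos
  -- exponents
  set s' : ℝ := q - (q - 2)/γ with hs'def
  set s : ℝ := q + 2/(γ - 1) with hsdef
  have hs'γ' : s' * γ' = s := by
    rw [hs'def, hsdef, hγ'def]
    field_simp
    ring
  have hsn : s + n = A / (γ - 1) := by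
    rw [hsdef, hAdef]; field_simp; ring
  have hsn0 : s + (n:ℝ) < 0 := by
    rw [hsn]; exact div_neg_of_neg_of_pos hA hγ1
  -- quantities
  set I : ℝ := ∫ x in 𝒱, ‖x‖ ^ (q - 2) * ρ x ^ γ with hIdef
  set J : ℝ := ∫ x in 𝒱, ‖x‖ ^ q * ρ x with hJdef
  set K : ℝ := σn * (ε ^ (s + (n:ℝ)) / (-(s + (n:ℝ)))) with hKdef
  have hσn : 0 < σn := by
    have h1 : 0 < (volume (Metric.ball (0 : EuclideanSpace ℝ (Fin n)) 1)).toReal :=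
      ENNReal.toReal_pos (Metric.measure_ball_pos volume 0 one_pos).ne' measure_ball_lt_top.ne
    have h2 : (0:ℝ) < n := by exact_mod_cast hn
    exact mul_pos h2 h1
  have hKpos : 0 < K := by
    have : (0:ℝ) < ε ^ (s + (n:ℝ)) / (-(s + (n:ℝ))) :=
      div_pos (rpow_pos_of_pos hε _) (by linarith)
    exact mul_pos hσn this
  have hVS : 𝒱 ⊆ {x : EuclideanSpace ℝ (Fin n) | ε ≤ ‖x‖} := fun x hx => hout x hx
  -- the functions for Hölder
  set f : EuclideanSpace ℝ (Fin n) → ℝ := fun x => ‖x‖ ^ ((q - 2)/γ) * ρ x with hfdef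
  set g : EuclideanSpace ℝ (Fin n) → ℝ := fun x => ‖x‖ ^ s' with hgdef
  set μr := volume.restrict 𝒱 with hμr
  have hfm : AEStronglyMeasurable f μr :=
    ((measurable_norm.pow_const _).mul hρ).aestronglyMeasurable
  have hgm : AEStronglyMeasurable g μr :=
    (measurable_norm.pow_const _).aestronglyMeasurable
  have hf0 : ∀ x, 0 ≤ f x := fun x =>
    mul_nonneg (rpow_nonneg (norm_nonneg _) _) (hρ0 x)
  have hg0 : ∀ x, 0 ≤ g x := fun x => rpow_nonneg (norm_nonneg _) _
  have hfpow' : ∀ x, f x ^ γ = ‖x‖ ^ (q - 2) * ρ x ^ γ := by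
    intro x
    rw [hfdef]
    rw [mul_rpow (rpow_nonneg (norm_nonneg _) _) (hρ0 x),
      ← Real.rpow_mul (norm_nonneg x), div_mul_cancel₀ _ (ne_of_gt hγ0)]
  have hfpow : ∀ x, ‖f x‖ ^ γ = ‖x‖ ^ (q - 2) * ρ x ^ γ := fun x => by
    rw [Real.norm_of_nonneg (hf0 x), hfpow' x]
  have hgpow' : ∀ x, g x ^ γ' = ‖x‖ ^ s := by
    intro x
    rw [hgdef]
    rw [← Real.rpow_mul (norm_nonneg x), hs'γ']
  have hgpow : ∀ x, ‖g x‖ ^ γ' = ‖x‖ ^ s := fun x => by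
    rw [Real.norm_of_nonneg (hg0 x), hgpow' x]
  have hfLp : MemLp f (ENNReal.ofReal γ) μr := by
    refine my_memLp_of_integrable_rpow hfm hγ0 ?_
    exact hfin.congr (Filter.EventuallyEq.of_eq (funext fun x => (hfpow x).symm))
  have hgintS : IntegrableOn (fun x : EuclideanSpace ℝ (Fin n) => ‖x‖ ^ s)
      {x : EuclideanSpace ℝ (Fin n) | ε ≤ ‖x‖} volume := my_integrableOn n hn hε hsn0
  have hgLp : MemLp g (ENNReal.ofReal γ') μr := by
    refine my_memLp_of_integrable_rpow hgm hγ'0 ?_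
    refine ((hgintS.mono_set hVS)).congr (Filter.EventuallyEq.of_eq ?_)
    exact funext fun x => (hgpow x).symm
  have hHolder := integral_mul_le_Lp_mul_Lq_of_nonneg (μ := μr) hconj
    (Filter.Eventually.of_forall fun x =>
      mul_nonneg (rpow_nonneg (norm_nonneg _) _) (hρ0 x))
    (Filter.Eventually.of_forall fun x => rpow_nonneg (norm_nonneg _) _)
    hfLp hgLp
  -- rewrite the three integrals in hHolder
  have hL : ∫ x, f x * g x ∂μr = J := by
    rw [hJdef, hμr]
    refine setIntegral_congr_fun hmeas fun x hx => ?_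
    have hx0 : (0:ℝ) < ‖x‖ := lt_of_lt_of_le hε (hout x hx)
    show ‖x‖ ^ ((q - 2)/γ) * ρ x * ‖x‖ ^ s' = ‖x‖ ^ q * ρ x
    rw [mul_right_comm, ← Real.rpow_add hx0,
      show (q-2)/γ + s' = q by rw [hs'def]; ring]
  have hM1 : ∫ x, f x ^ γ ∂μr = I := by
    rw [hIdef, hμr]
    exact setIntegral_congr_fun hmeas fun x _ => hfpow' x
  have hM2 : ∫ x, g x ^ γ' ∂μr ≤ K := by
    have h1 : ∫ x, g x ^ γ' ∂μr = ∫ x in 𝒱, ‖x‖ ^ s := by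
      rw [hμr]
      exact setIntegral_congr_fun hmeas fun x _ => hgpow' x
    have hKval : ∫ x in {x : EuclideanSpace ℝ (Fin n) | ε ≤ ‖x‖}, ‖x‖ ^ s = K := by
      rw [hKdef]
      exact my_polar_value n hn hε hsn0
    rw [h1, ← hKval]
    refine setIntegral_mono_set hgintS ?_ (Filter.Eventually.of_forall hVS)
    exact Filter.Eventually.of_forall fun x => rpow_nonneg (norm_nonneg _) _
  -- nonnegativity
  have hI0 : 0 ≤ I := setIntegral_nonneg hmeas fun x _ =>
    mul_nonneg (rpow_nonneg (norm_nonneg _) _) (rpow_nonneg (hρ0 x) _)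
  have hJ0 : 0 ≤ J := setIntegral_nonneg hmeas fun x _ =>
    mul_nonneg (rpow_nonneg (norm_nonneg _) _) (hρ0 x)
  have hint2 : (0:ℝ) ≤ ∫ x, g x ^ γ' ∂μr :=
    integral_nonneg fun x => rpow_nonneg (rpow_nonneg (norm_nonneg _) _) _
  -- J ≤ I^{1/γ} * K^{1/γ'}
  have hJle : J ≤ I ^ (1/γ) * K ^ (1/γ') := by
    rw [← hL, ← hM1]
    refine le_trans hHolder ?_
    exact mul_le_mul_of_nonneg_left
      (rpow_le_rpow hint2 hM2 (by positivity)) (rpow_nonneg (by rw [hM1]; exact hI0) _)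
  -- raise to power γ
  have hJγ : J ^ γ ≤ I * K ^ (γ - 1) := by
    calc J ^ γ ≤ (I ^ (1/γ) * K ^ (1/γ')) ^ γ := rpow_le_rpow hJ0 hJle hγ0.le
      _ = I * K ^ (γ - 1) := by
          rw [mul_rpow (rpow_nonneg hI0 _) (rpow_nonneg hKpos.le _),
            ← Real.rpow_mul hI0, ← Real.rpow_mul hKpos.le,
            one_div_mul_cancel (ne_of_gt hγ0), rpow_one,
            show 1/γ' * γ = γ - 1 by rw [hγ'def]; field_simp]
  -- algebraic conclusion
  have hK₀ : (0:ℝ) < σn * (1 - γ) / A := by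
    rw [div_pos_iff]
    right
    constructor
    · nlinarith
    · exact hA
  have hC₁ : (0:ℝ) < C₁ := rpow_pos_of_pos hK₀ _
  have hA0 : A ≠ 0 := ne_of_lt hA
  have hγ10 : γ - 1 ≠ 0 := ne_of_gt hγ1
  have hC₁def : C₁ = (σn * (1 - γ) / A) ^ (1 - γ) := rfl
  clear_value σn C₁ A γ' s' s I J K f g μr
  have hKK : K = (σn * (1 - γ) / A) * ε ^ (A / (γ - 1)) := by
    have e : -(A/(γ-1)) = A/(1-γ) := by
      rw [show (1-γ:ℝ) = -(γ-1) by ring, div_neg]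
    rw [hKdef, hsn, e, div_div_eq_mul_div]
    ring
  have hKγ : K ^ (γ - 1) = (σn * (1 - γ) / A) ^ (γ - 1) * ε ^ A := by
    rw [hKK, mul_rpow hK₀.le (rpow_nonneg hε.le _), ← Real.rpow_mul hε.le,
      div_mul_cancel₀ _ hγ10]
  have e1 : (σn * (1 - γ) / A) ^ (1 - γ) * (σn * (1 - γ) / A) ^ (γ - 1) = 1 := by
    rw [← Real.rpow_add hK₀]
    norm_num
  have e2 : ε ^ A * ε ^ (-A) = 1 := by
    rw [← Real.rpow_add hε]
    norm_num
  have hfinal : C₁ * K ^ (γ - 1) * ε ^ (-A) = 1 := by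
    calc C₁ * K ^ (γ - 1) * ε ^ (-A)
        = ((σn * (1 - γ) / A) ^ (1 - γ) * (σn * (1 - γ) / A) ^ (γ - 1)) * (ε ^ A * ε ^ (-A)) := by
          rw [hC₁def, hKγ]; ring
      _ = 1 := by rw [e1, e2, mul_one]
  calc C₁ * J ^ γ * ε ^ (-A)
      ≤ C₁ * (I * K ^ (γ - 1)) * ε ^ (-A) :=
        mul_le_mul_of_nonneg_right (mul_le_mul_of_nonneg_left hJγ hC₁.le)
          (rpow_nonneg hε.le _)
    _ = I * (C₁ * K ^ (γ - 1) * ε ^ (-A)) := by ring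
    _ = I := by rw [hfinal, mul_one]
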